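/- arXiv:1803.02496 — 3 statements merged into one kernel-verified Lean document; each statement's English description precedes it below -/
import Mathlib

section
/- The operator Q defined by the given kernel is the orthogonal projector onto completely traceless rank-3 tensors: Q² = Q, Q^⊤ = Q, and for all T, (QT)_{aab} = (QT)_{aba} = (QT)_{baa} = 0 (summation over a), while QT = T whenever T is traceless. -/
abbrev Tens (N : ℕ) := Fin N → Fin N → Fin N → ℝ

noncomputable def ip {N : ℕ} (T U : Tens N) : ℝ := ∑ a, ∑ b, ∑ c, T a b c * U a b c

noncomputable def kd {N : ℕ} (i j : Fin N) : ℝ := if i = j then 1 else 0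

/-- Kernel of the orthogonal projector onto completely traceless rank-3 tensors. -/
noncomputable def Qker (N : ℕ) (a1 a2 a3 b1 b2 b3 : Fin N) : ℝ :=
  kd a1 b1 * kd a2 b2 * kd a3 b3
  - ((N : ℝ)^2 + N - 2)⁻¹ *
    ( kd a1 a2 * (((N : ℝ)+1) * kd a3 b3 * kd b1 b2 - kd a3 b2 * kd b1 b3 - kd a3 b1 * kd b2 b3)
    + kd a1 a3 * (-(kd a2 b3 * kd b1 b2) + ((N : ℝ)+1) * kd a2 b2 * kd b1 b3 - kd a2 b1 * kd b2 b3)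
    + kd a2 a3 * (-(kd a1 b3 * kd b1 b2) - kd a1 b2 * kd b1 b3 + ((N : ℝ)+1) * kd a1 b1 * kd b2 b3))

noncomputable def Qmap (N : ℕ) : Tens N →ₗ[ℝ] Tens N where
  toFun T := fun a1 a2 a3 => ∑ b1, ∑ b2, ∑ b3, Qker N a1 a2 a3 b1 b2 b3 * T b1 b2 b3
  map_add' T U := by
    funext a1 a2 a3
    simp [Pi.add_apply, mul_add, Finset.sum_add_distrib]
  map_smul' c T := by
    funext a1 a2 a3
    simp only [Pi.smul_apply, smul_eq_mul, Finset.mul_sum]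
    refine Finset.sum_congr rfl fun b1 _ => Finset.sum_congr rfl fun b2 _ =>
      Finset.sum_congr rfl fun b3 _ => by simp only [RingHom.id_apply]; ring

/-- A rank-3 tensor is completely traceless if all three of its traces vanish. -/
def Traceless {N : ℕ} (T : Tens N) : Prop :=
  ∀ b : Fin N, (∑ a, T a a b = 0) ∧ (∑ a, T a b a = 0) ∧ (∑ a, T b a a = 0)

-- auxiliary
noncomputable def trA {N : ℕ} (T : Tens N) (b : Fin N) : ℝ := ∑ a, T a a b
noncomputable def trB {N : ℕ} (T : Tens N) (b : Fin N) : ℝ := ∑ a, T a b a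
noncomputable def trC {N : ℕ} (T : Tens N) (b : Fin N) : ℝ := ∑ a, T b a a

lemma con0 {N : ℕ} (T : Tens N) (a1 a2 a3 : Fin N) :
    ∑ b1, ∑ b2, ∑ b3, kd a1 b1 * kd a2 b2 * kd a3 b3 * T b1 b2 b3 = T a1 a2 a3 := by
  simp [kd, ite_mul]
lemma conA {N : ℕ} (T : Tens N) (i : Fin N) :
    ∑ b1 : Fin N, ∑ b2, ∑ b3, kd i b3 * kd b1 b2 * T b1 b2 b3 = trA T i := by
  simp [kd, trA, ite_mul]
lemma conB {N : ℕ} (T : Tens N) (i : Fin N) :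
    ∑ b1 : Fin N, ∑ b2, ∑ b3, kd i b2 * kd b1 b3 * T b1 b2 b3 = trB T i := by
  simp [kd, trB, ite_mul]
lemma conC {N : ℕ} (T : Tens N) (i : Fin N) :
    ∑ b1 : Fin N, ∑ b2, ∑ b3, kd i b1 * kd b2 b3 * T b1 b2 b3 = trC T i := by
  simp [kd, trC, ite_mul]

lemma Qmap_apply (N : ℕ) (T : Tens N) (a1 a2 a3 : Fin N) :
    Qmap N T a1 a2 a3
    = T a1 a2 a3 - ((N : ℝ)^2 + N - 2)⁻¹ *
      ( kd a1 a2 * (((N : ℝ)+1) * trA T a3 - trB T a3 - trC T a3)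
      + kd a1 a3 * (-(trA T a2) + ((N : ℝ)+1) * trB T a2 - trC T a2)
      + kd a2 a3 * (-(trA T a1) - trB T a1 + ((N : ℝ)+1) * trC T a1) ) := by
  show (∑ b1, ∑ b2, ∑ b3, Qker N a1 a2 a3 b1 b2 b3 * T b1 b2 b3) = _
  set c := ((N : ℝ)^2 + N - 2)⁻¹ with hc
  have key : ∀ b1 b2 b3 : Fin N, Qker N a1 a2 a3 b1 b2 b3 * T b1 b2 b3
      = kd a1 b1 * kd a2 b2 * kd a3 b3 * T b1 b2 b3
        - (c * (kd a1 a2 * ((N : ℝ)+1))) * (kd a3 b3 * kd b1 b2 * T b1 b2 b3)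
        + (c * kd a1 a2) * (kd a3 b2 * kd b1 b3 * T b1 b2 b3)
        + (c * kd a1 a2) * (kd a3 b1 * kd b2 b3 * T b1 b2 b3)
        + (c * kd a1 a3) * (kd a2 b3 * kd b1 b2 * T b1 b2 b3)
        - (c * (kd a1 a3 * ((N : ℝ)+1))) * (kd a2 b2 * kd b1 b3 * T b1 b2 b3)
        + (c * kd a1 a3) * (kd a2 b1 * kd b2 b3 * T b1 b2 b3)
        + (c * kd a2 a3) * (kd a1 b3 * kd b1 b2 * T b1 b2 b3)
        + (c * kd a2 a3) * (kd a1 b2 * kd b1 b3 * T b1 b2 b3)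
        - (c * (kd a2 a3 * ((N : ℝ)+1))) * (kd a1 b1 * kd b2 b3 * T b1 b2 b3) := by
    intro b1 b2 b3; unfold Qker; ring
  simp only [key, Finset.sum_sub_distrib, Finset.sum_add_distrib, ← Finset.mul_sum]
  rw [con0, conA, conA, conA, conB, conB, conB, conC, conC, conC]
  ring

lemma sum_kd_diag {N : ℕ} : ∑ a : Fin N, kd a a = N := by simp [kd]

lemma sum_kd_diag_mul {N : ℕ} (x : ℝ) : ∑ a : Fin N, kd a a * x = N * x := by
  rw [← Finset.sum_mul, sum_kd_diag]

lemma sum_kd_left {N : ℕ} (b : Fin N) (f : Fin N → ℝ) : ∑ a, kd a b * f a = f b := by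
  simp [kd, ite_mul]

lemma sum_kd_right {N : ℕ} (b : Fin N) (f : Fin N → ℝ) : ∑ a, kd b a * f a = f b := by
  simp [kd, ite_mul]

lemma denom_ne {N : ℕ} (hN : 2 ≤ N) : ((N : ℝ)^2 + N - 2) ≠ 0 := by
  have h2 : (2 : ℝ) ≤ (N : ℝ) := by exact_mod_cast hN
  nlinarith

lemma Q_traceless (N : ℕ) (hN : 2 ≤ N) (T : Tens N) : Traceless (Qmap N T) := by
  set c := ((N : ℝ)^2 + N - 2)⁻¹ with hc
  have hinv : c * ((N : ℝ)^2 + N - 2) = 1 := inv_mul_cancel₀ (denom_ne hN)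
  intro b
  refine ⟨?_, ?_, ?_⟩
  · have key : ∀ a : Fin N, Qmap N T a a b
        = T a a b - kd a a * (c * (((N : ℝ)+1) * trA T b - trB T b - trC T b))
          - kd a b * (c * (-(trA T a) + ((N : ℝ)+1) * trB T a - trC T a))
          - kd a b * (c * (-(trA T a) - trB T a + ((N : ℝ)+1) * trC T a)) := by
      intro a; rw [Qmap_apply]; ring
    simp only [key, Finset.sum_sub_distrib, sum_kd_diag_mul, sum_kd_left, sum_kd_right]
    show trA T b - _ - _ - _ = 0
    linear_combination (-(trA T b)) * hinv
  · have key : ∀ a : Fin N, Qmap N T a b a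
        = T a b a - kd a b * (c * (((N : ℝ)+1) * trA T a - trB T a - trC T a))
          - kd a a * (c * (-(trA T b) + ((N : ℝ)+1) * trB T b - trC T b))
          - kd b a * (c * (-(trA T a) - trB T a + ((N : ℝ)+1) * trC T a)) := by
      intro a; rw [Qmap_apply]; ring
    simp only [key, Finset.sum_sub_distrib, sum_kd_diag_mul, sum_kd_left, sum_kd_right]
    show trB T b - _ - _ - _ = 0
    linear_combination (-(trB T b)) * hinv
  · have key : ∀ a : Fin N, Qmap N T b a a
        = T b a a - kd b a * (c * (((N : ℝ)+1) * trA T a - trB T a - trC T a))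
          - kd b a * (c * (-(trA T a) + ((N : ℝ)+1) * trB T a - trC T a))
          - kd a a * (c * (-(trA T b) - trB T b + ((N : ℝ)+1) * trC T b)) := by
      intro a; rw [Qmap_apply]; ring
    simp only [key, Finset.sum_sub_distrib, sum_kd_diag_mul, sum_kd_left, sum_kd_right]
    show trC T b - _ - _ - _ = 0
    linear_combination (-(trC T b)) * hinv

lemma Q_fix (N : ℕ) (T : Tens N) (h : Traceless T) : Qmap N T = T := by
  funext a1 a2 a3
  rw [Qmap_apply]
  have hA : ∀ x, trA T x = 0 := fun x => (h x).1
  have hB : ∀ x, trB T x = 0 := fun x => (h x).2.1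
  have hC : ∀ x, trC T x = 0 := fun x => (h x).2.2
  simp [hA, hB, hC]

lemma conU_A {N : ℕ} (g : Fin N → ℝ) (U : Tens N) :
    ∑ a1 : Fin N, ∑ a2, ∑ a3, kd a1 a2 * g a3 * U a1 a2 a3 = ∑ x, g x * trA U x := by
  have h1 : ∀ a1 : Fin N, (∑ a2, ∑ a3, kd a1 a2 * g a3 * U a1 a2 a3) = ∑ a3, g a3 * U a1 a1 a3 := by
    intro a1
    rw [Finset.sum_comm]
    simp [kd, ite_mul]
  simp only [h1]
  rw [Finset.sum_comm]
  exact Finset.sum_congr rfl fun x _ => by rw [trA, Finset.mul_sum]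

lemma conU_B {N : ℕ} (g : Fin N → ℝ) (U : Tens N) :
    ∑ a1 : Fin N, ∑ a2, ∑ a3, kd a1 a3 * g a2 * U a1 a2 a3 = ∑ x, g x * trB U x := by
  have h1 : ∀ a1 : Fin N, (∑ a2, ∑ a3, kd a1 a3 * g a2 * U a1 a2 a3) = ∑ a2, g a2 * U a1 a2 a1 := by
    intro a1
    refine Finset.sum_congr rfl fun a2 _ => ?_
    simp [kd, ite_mul]
  simp only [h1]
  rw [Finset.sum_comm]
  exact Finset.sum_congr rfl fun x _ => by rw [trB, Finset.mul_sum]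

lemma conU_C {N : ℕ} (g : Fin N → ℝ) (U : Tens N) :
    ∑ a1 : Fin N, ∑ a2, ∑ a3, kd a2 a3 * g a1 * U a1 a2 a3 = ∑ x, g x * trC U x := by
  simp only [kd, ite_mul, one_mul, zero_mul, Finset.sum_ite_eq, Finset.sum_ite_eq',
    Finset.mem_univ, if_true]
  exact Finset.sum_congr rfl fun x _ => by rw [trC, Finset.mul_sum]

lemma ip_Q (N : ℕ) (T U : Tens N) :
    ip (Qmap N T) U = ip T U - ((N : ℝ)^2 + N - 2)⁻¹ *
      ∑ x, ( (((N : ℝ)+1) * trA T x - trB T x - trC T x) * trA U x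
           + (-(trA T x) + ((N : ℝ)+1) * trB T x - trC T x) * trB U x
           + (-(trA T x) - trB T x + ((N : ℝ)+1) * trC T x) * trC U x ) := by
  set c := ((N : ℝ)^2 + N - 2)⁻¹ with hc
  have hip : ip T U = ∑ a1, ∑ a2, ∑ a3, T a1 a2 a3 * U a1 a2 a3 := rfl
  show (∑ a1, ∑ a2, ∑ a3, Qmap N T a1 a2 a3 * U a1 a2 a3) = _
  have key : ∀ a1 a2 a3 : Fin N, Qmap N T a1 a2 a3 * U a1 a2 a3
      = T a1 a2 a3 * U a1 a2 a3
        - kd a1 a2 * (c * (((N : ℝ)+1) * trA T a3 - trB T a3 - trC T a3)) * U a1 a2 a3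
        - kd a1 a3 * (c * (-(trA T a2) + ((N : ℝ)+1) * trB T a2 - trC T a2)) * U a1 a2 a3
        - kd a2 a3 * (c * (-(trA T a1) - trB T a1 + ((N : ℝ)+1) * trC T a1)) * U a1 a2 a3 := by
    intro a1 a2 a3; rw [Qmap_apply]; ring
  simp only [key, Finset.sum_sub_distrib, conU_A, conU_B, conU_C]
  have hsum : (∑ x : Fin N, (c * (((N : ℝ)+1) * trA T x - trB T x - trC T x)) * trA U x)
      + (∑ x : Fin N, (c * (-(trA T x) + ((N : ℝ)+1) * trB T x - trC T x)) * trB U x)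
      + (∑ x : Fin N, (c * (-(trA T x) - trB T x + ((N : ℝ)+1) * trC T x)) * trC U x)
      = c * ∑ x, ( (((N : ℝ)+1) * trA T x - trB T x - trC T x) * trA U x
           + (-(trA T x) + ((N : ℝ)+1) * trB T x - trC T x) * trB U x
           + (-(trA T x) - trB T x + ((N : ℝ)+1) * trC T x) * trC U x ) := by
    rw [Finset.mul_sum, ← Finset.sum_add_distrib, ← Finset.sum_add_distrib]
    exact Finset.sum_congr rfl fun x _ => by ring
  rw [hip]
  linear_combination -hsum

lemma ip_comm {N : ℕ} (T U : Tens N) : ip T U = ip U T := by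
  unfold ip
  exact Finset.sum_congr rfl fun a _ => Finset.sum_congr rfl fun b _ =>
    Finset.sum_congr rfl fun d _ => mul_comm _ _

lemma Q_symm (N : ℕ) (T U : Tens N) : ip (Qmap N T) U = ip T (Qmap N U) := by
  rw [ip_comm T (Qmap N U), ip_Q, ip_Q, ip_comm T U]
  have h2 : (∑ x : Fin N, ( (((N : ℝ)+1) * trA T x - trB T x - trC T x) * trA U x
           + (-(trA T x) + ((N : ℝ)+1) * trB T x - trC T x) * trB U x
           + (-(trA T x) - trB T x + ((N : ℝ)+1) * trC T x) * trC U x ))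
      = ∑ x : Fin N, ( (((N : ℝ)+1) * trA U x - trB U x - trC U x) * trA T x
           + (-(trA U x) + ((N : ℝ)+1) * trB U x - trC U x) * trB T x
           + (-(trA U x) - trB U x + ((N : ℝ)+1) * trC U x) * trC T x ) :=
    Finset.sum_congr rfl fun x _ => by ring
  rw [h2]


theorem Qmap_traceless_projector (N : ℕ) (hN : 2 ≤ N) :
    (Qmap N ∘ₗ Qmap N = Qmap N) ∧
    (∀ T U : Tens N, ip (Qmap N T) U = ip T (Qmap N U)) ∧
    (∀ T : Tens N, Traceless (Qmap N T)) ∧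
    (∀ T : Tens N, Traceless T → Qmap N T = T) := by
  refine ⟨?_, fun T U => Q_symm N T U, fun T => Q_traceless N hN T, fun T h => Q_fix N T h⟩
  apply LinearMap.ext
  intro T
  show Qmap N (Qmap N T) = Qmap N T
  exact Q_fix N _ (Q_traceless N hN T)
end

section
/- The operator P := P̃ Q is an orthogonal projector (P² = P, P^⊤ = P) and its kernel is given explicitly by P_{a1 a2 a3, b1 b2 b3} = (1/3)(δ_{a1 b1}δ_{a2 b2}δ_{a3 b3} − δ_{a1 b3}δ_{a2 b2}δ_{a3 b1}) + (1/6)(δ_{a1 b2}δ_{a2 b1}δ_{a3 b3} + δ_{a1 b1}δ_{a2 b3}δ_{a3 b2}) − (1/6)(δ_{a1 b2}δ_{a2 b3}δ_{a3 b1} + δ_{a1 b3}δ_{a2 b1}δ_{a3 b2}) + (2(N−1))^{-1}(δ_{a1 b3}δ_{a2 a3}δ_{b1 b2} + δ_{a1 a2}δ_{a3 b1}δ_{b2 b3}) − (2(N−1))^{-1}(δ_{a1 b1}δ_{a2 a3}δ_{b2 b3} + δ_{a1 a2}δ_{a3 b3}δ_{b1 b2}). -/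
/-- The mixed-symmetry Young symmetrizer for the tableau with rows {1,2} and {3}. -/
noncomputable def Smap (N : ℕ) : Tens N →ₗ[ℝ] Tens N where
  toFun T := fun a1 a2 a3 =>
    (1/3 : ℝ) * (T a1 a2 a3 + T a2 a1 a3 - T a3 a2 a1 - T a2 a3 a1)
  map_add' T U := by funext a1 a2 a3; simp [Pi.add_apply]; ring
  map_smul' c T := by funext a1 a2 a3; simp [Pi.smul_apply, smul_eq_mul]; ring

/-- The explicit kernel of the projector P onto traceless mixed-symmetry tensors. -/
noncomputable def Pker (N : ℕ) (a1 a2 a3 b1 b2 b3 : Fin N) : ℝ :=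
  (1/3 : ℝ) * (kd a1 b1 * kd a2 b2 * kd a3 b3 - kd a1 b3 * kd a2 b2 * kd a3 b1)
  + (1/6 : ℝ) * (kd a1 b2 * kd a2 b1 * kd a3 b3 + kd a1 b1 * kd a2 b3 * kd a3 b2)
  - (1/6 : ℝ) * (kd a1 b2 * kd a2 b3 * kd a3 b1 + kd a1 b3 * kd a2 b1 * kd a3 b2)
  + (2 * ((N : ℝ) - 1))⁻¹ * (kd a1 b3 * kd a2 a3 * kd b1 b2 + kd a1 a2 * kd a3 b1 * kd b2 b3)
  - (2 * ((N : ℝ) - 1))⁻¹ * (kd a1 b1 * kd a2 a3 * kd b2 b3 + kd a1 a2 * kd a3 b3 * kd b1 b2)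

noncomputable def Pmap (N : ℕ) : Tens N →ₗ[ℝ] Tens N where
  toFun T := fun a1 a2 a3 => ∑ b1, ∑ b2, ∑ b3, Pker N a1 a2 a3 b1 b2 b3 * T b1 b2 b3
  map_add' T U := by
    funext a1 a2 a3
    simp [Pi.add_apply, mul_add, Finset.sum_add_distrib]
  map_smul' c T := by
    funext a1 a2 a3
    simp only [Pi.smul_apply, smul_eq_mul, Finset.mul_sum]
    refine Finset.sum_congr rfl fun b1 _ => Finset.sum_congr rfl fun b2 _ =>
      Finset.sum_congr rfl fun b3 _ => by simp only [RingHom.id_apply]; ring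


lemma kd_comm {N : ℕ} (i j : Fin N) : (kd i j : ℝ) = kd j i := by
  simp [kd, eq_comm]

lemma kd_self {N : ℕ} (i : Fin N) : (kd i i : ℝ) = 1 := by simp [kd]

lemma foldkd {N : ℕ} (i j : Fin N) (x : ℝ) : (if i = j then x else 0) = kd i j * x := by
  by_cases h : i = j <;> simp [kd, h]

lemma St_eq {N : ℕ} (St : Tens N →ₗ[ℝ] Tens N)
    (hSt : ∀ T U : Tens N, ip (Smap N T) U = ip T (St U)) (U : Tens N) (x y z : Fin N) :
    St U x y z = (1/3 : ℝ) * (U x y z + U y x z - U z y x - U z x y) := by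
  have h := hSt (fun p q r => kd p x * kd q y * kd r z) U
  simp only [ip, Smap, LinearMap.coe_mk, AddHom.coe_mk, kd, mul_ite, ite_mul, one_mul, mul_one,
    zero_mul, mul_zero, mul_add, add_mul, mul_sub, sub_mul, Finset.sum_add_distrib,
    Finset.sum_sub_distrib, Finset.sum_ite_eq, Finset.sum_ite_eq', Finset.sum_ite_irrel,
    Finset.mem_univ, if_true, Finset.sum_const_zero] at h
  linarith [h]

lemma fubini6 {N : ℕ} (F : Fin N → Fin N → Fin N → Fin N → Fin N → Fin N → ℝ) :
    (∑ a1, ∑ a2, ∑ a3, ∑ b1, ∑ b2, ∑ b3, F a1 a2 a3 b1 b2 b3)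
      = ∑ b1, ∑ b2, ∑ b3, ∑ a1, ∑ a2, ∑ a3, F a1 a2 a3 b1 b2 b3 := by
  have h1 : ∀ (G : Fin N → Fin N → Fin N → ℝ),
      (∑ x, ∑ y, ∑ z, G x y z) = ∑ p : Fin N × Fin N × Fin N, G p.1 p.2.1 p.2.2 := by
    intro G; rw [Fintype.sum_prod_type]
    exact Finset.sum_congr rfl fun x _ => by rw [Fintype.sum_prod_type]
  rw [h1 (fun a1 a2 a3 => ∑ b1, ∑ b2, ∑ b3, F a1 a2 a3 b1 b2 b3),
      h1 (fun b1 b2 b3 => ∑ a1, ∑ a2, ∑ a3, F a1 a2 a3 b1 b2 b3)]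
  simp only [h1]
  exact Finset.sum_comm

lemma Pker_symm {N : ℕ} (a1 a2 a3 b1 b2 b3 : Fin N) :
    Pker N a1 a2 a3 b1 b2 b3 = Pker N b1 b2 b3 a1 a2 a3 := by
  simp only [Pker, kd_comm b1 a1, kd_comm b1 a2, kd_comm b1 a3, kd_comm b2 a1, kd_comm b2 a2,
    kd_comm b2 a3, kd_comm b3 a1, kd_comm b3 a2, kd_comm b3 a3]
  ring

lemma key {N : ℕ} (hN : 2 ≤ N) (a1 a2 a3 b1 b2 b3 : Fin N) :
    (1/6 : ℝ) * (2 * Qker N a1 a2 a3 b1 b2 b3 + Qker N a2 a1 a3 b1 b2 b3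
      + Qker N a1 a3 a2 b1 b2 b3 - 2 * Qker N a3 a2 a1 b1 b2 b3
      - Qker N a3 a1 a2 b1 b2 b3 - Qker N a2 a3 a1 b1 b2 b3)
      = Pker N a1 a2 a3 b1 b2 b3 := by
  have h2 : ((N : ℝ) - 1) ≠ 0 := by
    have : (2:ℝ) ≤ (N:ℝ) := by exact_mod_cast hN
    nlinarith
  have h3 : ((N : ℝ) + 2) ≠ 0 := by positivity
  have h4 : ((N : ℝ)^2 + N - 2) = ((N:ℝ) - 1) * ((N:ℝ) + 2) := by ring
  simp only [Qker, Pker, kd_comm a2 a1, kd_comm a3 a1, kd_comm a3 a2, h4]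
  field_simp
  ring

lemma P_apply {N : ℕ} (hN : 2 ≤ N) (St : Tens N →ₗ[ℝ] Tens N)
    (hSt : ∀ T U : Tens N, ip (Smap N T) U = ip T (St U)) (T : Tens N) (a1 a2 a3 : Fin N) :
    (((3/4 : ℝ) • (Smap N ∘ₗ St)) ∘ₗ Qmap N) T a1 a2 a3
      = ∑ b1, ∑ b2, ∑ b3, Pker N a1 a2 a3 b1 b2 b3 * T b1 b2 b3 := by
  have hQ : ∀ x y z : Fin N, Qmap N T x y z
      = ∑ b1, ∑ b2, ∑ b3, Qker N x y z b1 b2 b3 * T b1 b2 b3 := fun _ _ _ => rfl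
  have hS : ∀ (W : Tens N) (x y z : Fin N), Smap N W x y z
      = (1/3:ℝ) * (W x y z + W y x z - W z y x - W y z x) := fun _ _ _ _ => rfl
  rw [LinearMap.comp_apply, LinearMap.smul_apply, LinearMap.comp_apply]
  simp only [Pi.smul_apply, smul_eq_mul]
  rw [hS]
  rw [St_eq St hSt, St_eq St hSt, St_eq St hSt, St_eq St hSt]
  simp only [hQ]
  trans (∑ b1, ∑ b2, ∑ b3,
      ((1/6:ℝ) * (Qker N a1 a2 a3 b1 b2 b3 * T b1 b2 b3)
      + (1/6:ℝ) * (Qker N a1 a2 a3 b1 b2 b3 * T b1 b2 b3)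
      + (1/6:ℝ) * (Qker N a2 a1 a3 b1 b2 b3 * T b1 b2 b3)
      + (1/6:ℝ) * (Qker N a1 a3 a2 b1 b2 b3 * T b1 b2 b3)
      - (1/6:ℝ) * (Qker N a3 a2 a1 b1 b2 b3 * T b1 b2 b3)
      - (1/6:ℝ) * (Qker N a3 a2 a1 b1 b2 b3 * T b1 b2 b3)
      - (1/6:ℝ) * (Qker N a3 a1 a2 b1 b2 b3 * T b1 b2 b3)
      - (1/6:ℝ) * (Qker N a2 a3 a1 b1 b2 b3 * T b1 b2 b3)))
  · simp only [Finset.sum_add_distrib, Finset.sum_sub_distrib, ← Finset.mul_sum]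
    ring
  · refine Finset.sum_congr rfl fun b1 _ => Finset.sum_congr rfl fun b2 _ =>
      Finset.sum_congr rfl fun b3 _ => ?_
    linear_combination (key hN a1 a2 a3 b1 b2 b3) * T b1 b2 b3

set_option maxHeartbeats 4000000 in
lemma Pconv (N : ℕ) (hN : 2 ≤ N) (a1 a2 a3 c1 c2 c3 : Fin N) :
    ∑ b1, ∑ b2, ∑ b3, Pker N a1 a2 a3 b1 b2 b3 * Pker N b1 b2 b3 c1 c2 c3
      = Pker N a1 a2 a3 c1 c2 c3 := by
  have hne : (2 : ℝ) * (N : ℝ) - 2 ≠ 0 := by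
    have : (2:ℝ) ≤ (N:ℝ) := by exact_mod_cast hN
    nlinarith
  simp only [Pker, kd, mul_ite, ite_mul, mul_one, one_mul, mul_zero, zero_mul,
    mul_add, add_mul, mul_sub, sub_mul, Finset.sum_add_distrib, Finset.sum_sub_distrib,
    Finset.sum_ite_eq, Finset.sum_ite_eq', Finset.sum_ite_irrel, Finset.sum_const,
    Finset.mem_univ, if_true, Finset.card_univ, Fintype.card_fin, smul_eq_mul, smul_zero,
    nsmul_eq_mul, Finset.sum_const_zero, add_zero, zero_add, sub_zero, zero_sub, neg_zero,
    neg_neg, mul_neg, neg_mul]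
  simp only [foldkd]
  simp only [kd_comm c2 c1, kd_comm c3 c1, kd_comm c3 c2, kd_comm a2 a1, kd_comm a3 a1,
    kd_comm a3 a2, kd_comm c1 a1, kd_comm c1 a2, kd_comm c1 a3, kd_comm c2 a1,
    kd_comm c2 a2, kd_comm c2 a3, kd_comm c3 a1, kd_comm c3 a2, kd_comm c3 a3]
  field_simp [hne]
  ring

theorem P_orthogonal_projector_and_kernel (N : ℕ) (hN : 2 ≤ N) (St : Tens N →ₗ[ℝ] Tens N)
    (hSt : ∀ T U : Tens N, ip (Smap N T) U = ip T (St U)) :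
    (((3/4 : ℝ) • (Smap N ∘ₗ St)) ∘ₗ Qmap N) ∘ₗ (((3/4 : ℝ) • (Smap N ∘ₗ St)) ∘ₗ Qmap N)
        = ((3/4 : ℝ) • (Smap N ∘ₗ St)) ∘ₗ Qmap N ∧
    (∀ T U : Tens N,
      ip ((((3/4 : ℝ) • (Smap N ∘ₗ St)) ∘ₗ Qmap N) T) U
        = ip T ((((3/4 : ℝ) • (Smap N ∘ₗ St)) ∘ₗ Qmap N) U)) ∧
    (∀ (T : Tens N) (a1 a2 a3 : Fin N),
      (((3/4 : ℝ) • (Smap N ∘ₗ St)) ∘ₗ Qmap N) T a1 a2 a3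
        = ∑ b1, ∑ b2, ∑ b3, Pker N a1 a2 a3 b1 b2 b3 * T b1 b2 b3) := by
  refine ⟨?_, ?_, fun T a1 a2 a3 => P_apply hN St hSt T a1 a2 a3⟩
  · -- idempotent
    apply LinearMap.ext
    intro T
    funext a1 a2 a3
    rw [LinearMap.comp_apply]
    rw [P_apply hN St hSt]
    simp only [P_apply hN St hSt]
    calc (∑ b1, ∑ b2, ∑ b3, Pker N a1 a2 a3 b1 b2 b3 *
            ∑ c1, ∑ c2, ∑ c3, Pker N b1 b2 b3 c1 c2 c3 * T c1 c2 c3)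
        = ∑ b1, ∑ b2, ∑ b3, ∑ c1, ∑ c2, ∑ c3,
            Pker N a1 a2 a3 b1 b2 b3 * (Pker N b1 b2 b3 c1 c2 c3 * T c1 c2 c3) := by
          simp only [Finset.mul_sum]
      _ = ∑ c1, ∑ c2, ∑ c3, ∑ b1, ∑ b2, ∑ b3,
            Pker N a1 a2 a3 b1 b2 b3 * (Pker N b1 b2 b3 c1 c2 c3 * T c1 c2 c3) :=
          fubini6 _
      _ = ∑ c1, ∑ c2, ∑ c3, (∑ b1, ∑ b2, ∑ b3,
            Pker N a1 a2 a3 b1 b2 b3 * Pker N b1 b2 b3 c1 c2 c3) * T c1 c2 c3 := by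
          simp only [← mul_assoc, ← Finset.sum_mul]
      _ = ∑ c1, ∑ c2, ∑ c3, Pker N a1 a2 a3 c1 c2 c3 * T c1 c2 c3 := by
          refine Finset.sum_congr rfl fun c1 _ => Finset.sum_congr rfl fun c2 _ =>
            Finset.sum_congr rfl fun c3 _ => ?_
          rw [Pconv N hN]
  · -- self-adjoint
    intro T U
    simp only [ip]
    calc (∑ a1, ∑ a2, ∑ a3, (((3/4 : ℝ) • (Smap N ∘ₗ St)) ∘ₗ Qmap N) T a1 a2 a3 * U a1 a2 a3)
        = ∑ a1, ∑ a2, ∑ a3, ∑ b1, ∑ b2, ∑ b3,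
            Pker N a1 a2 a3 b1 b2 b3 * T b1 b2 b3 * U a1 a2 a3 := by
          refine Finset.sum_congr rfl fun a1 _ => Finset.sum_congr rfl fun a2 _ =>
            Finset.sum_congr rfl fun a3 _ => ?_
          rw [P_apply hN St hSt]
          simp only [Finset.sum_mul]
      _ = ∑ b1, ∑ b2, ∑ b3, ∑ a1, ∑ a2, ∑ a3,
            Pker N a1 a2 a3 b1 b2 b3 * T b1 b2 b3 * U a1 a2 a3 := fubini6 _
      _ = ∑ b1, ∑ b2, ∑ b3, T b1 b2 b3 * ∑ a1, ∑ a2, ∑ a3,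
            Pker N b1 b2 b3 a1 a2 a3 * U a1 a2 a3 := by
          refine Finset.sum_congr rfl fun b1 _ => Finset.sum_congr rfl fun b2 _ =>
            Finset.sum_congr rfl fun b3 _ => ?_
          simp only [Finset.mul_sum]
          refine Finset.sum_congr rfl fun a1 _ => Finset.sum_congr rfl fun a2 _ =>
            Finset.sum_congr rfl fun a3 _ => ?_
          rw [Pker_symm b1 b2 b3 a1 a2 a3]
          ring
      _ = ∑ b1, ∑ b2, ∑ b3, T b1 b2 b3 * (((3/4 : ℝ) • (Smap N ∘ₗ St)) ∘ₗ Qmap N) U b1 b2 b3 := by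
          refine Finset.sum_congr rfl fun b1 _ => Finset.sum_congr rfl fun b2 _ =>
            Finset.sum_congr rfl fun b3 _ => ?_
          rw [P_apply hN St hSt]
end

section
/- In the trace decomposition of a rank-3 tensor, the vector φ is given explicitly by φ_i = √N (N²+N−2)^{-1} (−T_{aai} + (N+1) T_{aia} − T_{iaa}) (summing over a). -/
theorem phi_formula (N : ℕ) (hN : 2 ≤ N) (T T0 : Tens N)
    (χ φ ψ : Fin N → ℝ) (hT0 : Traceless T0)
    (hdec : ∀ a1 a2 a3 : Fin N,
      T a1 a2 a3 = T0 a1 a2 a3 + (Real.sqrt N)⁻¹ *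
        (χ a1 * kd a2 a3 + φ a2 * kd a1 a3 + ψ a3 * kd a1 a2)) :
    ∀ i : Fin N, φ i = Real.sqrt N / ((N : ℝ)^2 + N - 2) *
      (-(∑ a, T a a i) + ((N : ℝ) + 1) * (∑ a, T a i a) - ∑ a, T i a a) := by
  intro i
  have hNpos : (0:ℝ) < N := by
    have : (2:ℝ) ≤ N := by exact_mod_cast hN
    linarith
  have hs : Real.sqrt N ≠ 0 := by positivity
  have hA : ∑ a, T a a i = (Real.sqrt N)⁻¹ * (χ i + φ i + N * ψ i) := by
    simp only [hdec, kd, Finset.sum_add_distrib, (hT0 i).1, Finset.mul_sum]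
    simp [mul_add, mul_ite, Finset.sum_ite_eq', Finset.mul_sum, Finset.sum_add_distrib]
    ring
  have hB : ∑ a, T a i a = (Real.sqrt N)⁻¹ * (χ i + N * φ i + ψ i) := by
    simp only [hdec, kd, Finset.sum_add_distrib, (hT0 i).2.1, Finset.mul_sum]
    simp [mul_add, mul_ite, Finset.sum_ite_eq', Finset.mul_sum, Finset.sum_add_distrib]
    ring
  have hC : ∑ a, T i a a = (Real.sqrt N)⁻¹ * (N * χ i + φ i + ψ i) := by
    simp only [hdec, kd, Finset.sum_add_distrib, (hT0 i).2.2, Finset.mul_sum]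
    simp [mul_add, mul_ite, Finset.sum_ite_eq', Finset.mul_sum, Finset.sum_add_distrib]
    ring
  rw [hA, hB, hC]
  have hd : ((N:ℝ)^2 + N - 2) ≠ 0 := by
    have : (2:ℝ) ≤ N := by exact_mod_cast hN
    nlinarith
  rw [div_mul_eq_mul_div, eq_div_iff hd]
  field_simp
  ring
end
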